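/- Let p and q be distinct primes and set F(t) = Φ_{pq}(t)·Φ_{p²q}(t)·Φ_{pq²}(t) and G(t) = Φ_{p²q²}(t)·Φ_{pq}(t)·Φ_{pq}(t) in ℤ[t]. Then |R(F(t), tⁿ−1)| = |R(G(t), tⁿ−1)| for every n ≥ 1. -/

import Mathlib

open Polynomial Matrix Finset

set_option synthInstance.maxHeartbeats 1000000
set_option maxHeartbeats 1000000

noncomputable section

/-- The Sylvester matrix of two polynomials `f, g ∈ ℤ[t]` of degrees `d, e`: the
`(d+e) × (d+e)` matrix whose first `e` rows are the shifted coefficient sequences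
`a₀ a₁ ⋯ a_d` of `f` (with `a_k` the coefficient of `t^{d-k}`) and whose last `d` rows are
the shifted coefficient sequences `b₀ b₁ ⋯ b_e` of `g`. -/
def sylvesterMatrix (f g : Polynomial ℤ) :
    Matrix (Fin (f.natDegree + g.natDegree)) (Fin (f.natDegree + g.natDegree)) ℤ :=
  fun i j =>
    if (i : ℕ) < g.natDegree then
      (if (i : ℕ) ≤ (j : ℕ) ∧ (j : ℕ) ≤ (i : ℕ) + f.natDegree
        then f.coeff (f.natDegree - ((j : ℕ) - (i : ℕ))) else 0)
    else
      (if ((i : ℕ) - g.natDegree) ≤ (j : ℕ) ∧ (j : ℕ) ≤ ((i : ℕ) - g.natDegree) + g.natDegree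
        then g.coeff (g.natDegree - ((j : ℕ) - ((i : ℕ) - g.natDegree))) else 0)

/-- The resultant `R(f,g)` of two polynomials `f, g ∈ ℤ[t]`, the determinant of their
Sylvester matrix. -/
def resultant (f g : Polynomial ℤ) : ℤ :=
  (sylvesterMatrix f g).det

/-- A polynomial `f(t) = Σ_{i=0}^d a_i t^{d-i}` of degree `d` is reciprocal if
`a_i = a_{d-i}` for every `i`. -/
def IsReciprocal (f : Polynomial ℤ) : Prop :=
  ∀ i ≤ f.natDegree, f.coeff i = f.coeff (f.natDegree - i)


def Complex.abs : AbsoluteValue ℂ ℝ := NormedField.toAbsoluteValue ℂ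

lemma Complex.abs_apply (z : ℂ) : Complex.abs z = ‖z‖ := rfl

lemma Complex.abs_exp_ofReal_mul_I (x : ℝ) : Complex.abs (Complex.exp (x * Complex.I)) = 1 := by
  rw [Complex.abs_apply, Complex.norm_exp_ofReal_mul_I]

lemma Complex.abs_intCast (n : ℤ) : Complex.abs (n : ℂ) = |(n : ℝ)| := by
  rw [Complex.abs_apply, ← Complex.ofReal_intCast, Complex.norm_real, Real.norm_eq_abs]

def emb (d n : ℕ) : Fin n ⊕ Fin d ≃ Fin (d + n) :=
  finSumFinEquiv.trans (finCongr (Nat.add_comm n d))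

lemma emb_inl (d n : ℕ) (j : Fin n) : ((emb d n (Sum.inl j) : Fin (d+n)) : ℕ) = (j : ℕ) := rfl

lemma emb_inr (d n : ℕ) (j : Fin d) : ((emb d n (Sum.inr j) : Fin (d+n)) : ℕ) = n + (j : ℕ) := rfl

lemma abs_det_eq (d n : ℕ) (hn : 1 ≤ n)
    (S : Matrix (Fin (d + n)) (Fin (d + n)) ℂ)
    (β : Fin n → ℂ) (hβ : Function.Injective β) (hβ1 : ∀ k, Complex.abs (β k) = 1)
    (φ : Fin n → ℂ)
    (hrow : ∀ (i : Fin (d + n)) (k : Fin n),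
      ∑ j, S i j * β k ^ (d + n - 1 - (j : ℕ)) =
        if (i : ℕ) < n then β k ^ (n - 1 - (i : ℕ)) * φ k else 0)
    (hD : ∀ (i k : Fin d),
      S (emb d n (Sum.inr i)) (emb d n (Sum.inr k)) =
        if (i : ℕ) = (k : ℕ) then -1 else if (i : ℕ) = (k : ℕ) + n then 1 else 0) :
    Complex.abs S.det = ∏ k, Complex.abs (φ k) := by
  classical
  set e := emb d n with he
  set W : Matrix (Fin n) (Fin n) ℂ := Matrix.of fun j k => β k ^ (n - 1 - (j : ℕ)) with hW
  set Wtop : Matrix (Fin n) (Fin n) ℂ := Matrix.of fun j k => β k ^ (d + n - 1 - (j : ℕ)) with hWtop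
  set Wb : Matrix (Fin d) (Fin n) ℂ := Matrix.of fun j k => β k ^ (d - 1 - (j : ℕ)) with hWb
  set S11 : Matrix (Fin n) (Fin n) ℂ := Matrix.of fun i j => S (e (Sum.inl i)) (e (Sum.inl j)) with hS11
  set S12 : Matrix (Fin n) (Fin d) ℂ := Matrix.of fun i j => S (e (Sum.inl i)) (e (Sum.inr j)) with hS12
  set S21 : Matrix (Fin d) (Fin n) ℂ := Matrix.of fun i j => S (e (Sum.inr i)) (e (Sum.inl j)) with hS21
  set S22 : Matrix (Fin d) (Fin d) ℂ := Matrix.of fun i j => S (e (Sum.inr i)) (e (Sum.inr j)) with hS22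
  set A : Matrix (Fin n) (Fin n) ℂ := Matrix.of fun j k => φ k * W j k with hA
  have key : ∀ (x : Fin n ⊕ Fin d) (k : Fin n),
      (∑ j : Fin n, S (e x) (e (Sum.inl j)) * Wtop j k) +
        ∑ j : Fin d, S (e x) (e (Sum.inr j)) * Wb j k =
      if ((e x : Fin (d+n)) : ℕ) < n then β k ^ (n - 1 - ((e x : Fin (d+n)) : ℕ)) * φ k else 0 := by
    intro x k
    rw [← hrow (e x) k]
    rw [← Equiv.sum_comp e (fun j => S (e x) j * β k ^ (d + n - 1 - (j : ℕ))),
      Fintype.sum_sum_type]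
    congr 1
    apply Finset.sum_congr rfl; intro j _
    have : Wb j k = β k ^ (d + n - 1 - ((e (Sum.inr j) : Fin (d+n)) : ℕ)) := by
      rw [he, emb_inr]
      simp only [hWb, Matrix.of_apply]
      congr 1
      omega
    rw [this]
  have h1 : S11 * Wtop + S12 * Wb = A := by
    ext j k
    have := key (Sum.inl j) k
    simp only [Matrix.add_apply, Matrix.mul_apply, hS11, hS12, Matrix.of_apply] at this ⊢
    rw [this]
    have hj : ((e (Sum.inl j) : Fin (d+n)) : ℕ) = (j : ℕ) := by rw [he, emb_inl]
    rw [hj, if_pos j.isLt]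
    simp only [hA, hW, Matrix.of_apply]
    ring
  have h2 : S21 * Wtop + S22 * Wb = 0 := by
    ext i k
    have := key (Sum.inr i) k
    simp only [Matrix.add_apply, Matrix.mul_apply, hS21, hS22, Matrix.of_apply] at this ⊢
    rw [this]
    have hi : ((e (Sum.inr i) : Fin (d+n)) : ℕ) = n + (i : ℕ) := by rw [he, emb_inr]
    rw [hi, if_neg (by omega)]
    rfl
  have hS' : S.submatrix e e = Matrix.fromBlocks S11 S12 S21 S22 := by
    ext i j
    cases i <;> cases j <;> rfl
  have hmul : S.submatrix e e * Matrix.fromBlocks Wtop 0 Wb 1 =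
      Matrix.fromBlocks A S12 0 S22 := by
    rw [hS', Matrix.fromBlocks_multiply, Matrix.mul_zero, Matrix.mul_zero, Matrix.mul_one,
      Matrix.mul_one, zero_add, zero_add, h1, h2]
  have hdetmul : S.det * (Matrix.fromBlocks Wtop (0 : Matrix (Fin n) (Fin d) ℂ) Wb
      (1 : Matrix (Fin d) (Fin d) ℂ)).det = A.det * S22.det := by
    rw [← Matrix.det_submatrix_equiv_self e S, ← Matrix.det_mul, hmul,
      Matrix.det_fromBlocks_zero₂₁]
  have hdetV : (Matrix.fromBlocks Wtop (0 : Matrix (Fin n) (Fin d) ℂ) Wb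
      (1 : Matrix (Fin d) (Fin d) ℂ)).det = Wtop.det := by
    rw [Matrix.det_fromBlocks_zero₁₂, Matrix.det_one, mul_one]
  have hWtopdet : Wtop.det = (∏ k : Fin n, β k ^ d) * W.det := by
    have hE : Wtop = Matrix.of fun i j => (fun k : Fin n => β k ^ d) j * W i j := by
      ext i j
      simp only [hWtop, hW, Matrix.of_apply, ← pow_add]
      congr 1
      have := i.isLt
      omega
    rw [hE, Matrix.det_mul_row]
  have hAdet : A.det = (∏ k, φ k) * W.det := by
    rw [hA, Matrix.det_mul_row]
  have hS22det : S22.det = (-1 : ℂ) ^ d := by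
    rw [Matrix.det_of_lowerTriangular S22 ?_]
    · rw [hS22]
      simp only [Matrix.of_apply]
      rw [Finset.prod_congr rfl (fun i _ => by rw [hD i i, if_pos rfl])]
      simp
    · intro i j hij
      have hij' : (i : ℕ) < (j : ℕ) := hij
      rw [hS22, Matrix.of_apply, hD, if_neg (by omega), if_neg (by omega)]
  have hWdet : W.det ≠ 0 := by
    have h1 : (W.submatrix (Fin.revPerm) id) = (Matrix.vandermonde β)ᵀ := by
      ext j k
      simp only [Matrix.submatrix_apply, hW, Matrix.of_apply, Matrix.transpose_apply,
        Matrix.vandermonde, id_eq, Fin.revPerm_apply]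
      congr 1
      have := j.isLt
      rw [Fin.val_rev]
      omega
    have h2 := Matrix.det_permute (Fin.revPerm) W
    rw [h1, Matrix.det_transpose] at h2
    intro h0
    rw [h0, mul_zero] at h2
    exact (Matrix.det_vandermonde_ne_zero_iff.mpr hβ) h2
  have main : S.det * ((∏ k : Fin n, β k ^ d) * W.det) =
      ((∏ k, φ k) * W.det) * (-1 : ℂ) ^ d := by
    rw [← hWtopdet, ← hdetV, hdetmul, hAdet, hS22det]
  have habs := congrArg Complex.abs main
  rw [_root_.map_mul, _root_.map_mul, _root_.map_mul, _root_.map_mul] at habs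
  have e1 : Complex.abs (∏ k : Fin n, β k ^ d) = 1 := by
    rw [map_prod]
    rw [Finset.prod_congr rfl (fun k _ => by rw [map_pow, hβ1 k, one_pow] : ∀ k ∈ Finset.univ, Complex.abs (β k ^ d) = 1)]
    simp
  have e2 : Complex.abs ((-1 : ℂ) ^ d) = 1 := by simp
  have e3 : Complex.abs (∏ k : Fin n, φ k) = ∏ k, Complex.abs (φ k) :=
    map_prod Complex.abs _ _
  rw [e1, e2, e3, one_mul, mul_one] at habs
  exact mul_right_cancel₀ (Complex.abs.ne_zero_iff.mpr hWdet) habs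

lemma abs_resultant (f g : Polynomial ℤ) (n : ℕ) (hn : 1 ≤ n)
    (hgd : g.natDegree = n)
    (hgc : ∀ k, g.coeff k = if k = n then 1 else if k = 0 then -1 else 0) :
    ((_root_.resultant f g).natAbs : ℝ) =
      ∏ ζ ∈ Polynomial.nthRootsFinset n (1 : ℂ),
        Complex.abs ((f.map (Int.castRingHom ℂ)).eval ζ) := by
  classical
  subst hgd
  set d : ℕ := f.natDegree with hd
  set m : ℕ := g.natDegree with hm
  have hm0 : m ≠ 0 := by omega
  set ζ0 : ℂ := Complex.exp (2 * Real.pi * Complex.I / m) with hζ0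
  have hζ : IsPrimitiveRoot ζ0 m := Complex.isPrimitiveRoot_exp m hm0
  set β : Fin m → ℂ := fun k => ζ0 ^ (k : ℕ) with hβdef
  have hβn : ∀ k, β k ^ m = 1 := by
    intro k
    rw [hβdef, ← pow_mul, mul_comm, pow_mul, hζ.pow_eq_one, one_pow]
  have hβ : Function.Injective β := by
    intro a b hab
    exact Fin.ext (hζ.pow_inj a.isLt b.isLt hab)
  have habsζ : Complex.abs ζ0 = 1 := by
    rw [hζ0]
    have harg : (2 * (Real.pi : ℂ) * Complex.I / (m : ℂ)) =
        ((2 * Real.pi / m : ℝ) : ℂ) * Complex.I := by push_cast; ring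
    rw [harg, Complex.abs_exp_ofReal_mul_I]
  have hβ1 : ∀ k, Complex.abs (β k) = 1 := by
    intro k
    rw [hβdef, map_pow, habsζ, one_pow]
  set fC : Polynomial ℂ := f.map (Int.castRingHom ℂ) with hfC
  set φ : Fin m → ℂ := fun k => fC.eval (β k) with hφdef
  set S : Matrix (Fin (d + m)) (Fin (d + m)) ℂ :=
    (sylvesterMatrix f g).map (Int.cast : ℤ → ℂ) with hSdef
  have hrow : ∀ (i : Fin (d + m)) (k : Fin m),
      ∑ j, S i j * β k ^ (d + m - 1 - (j : ℕ)) =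
        if (i : ℕ) < m then β k ^ (m - 1 - (i : ℕ)) * φ k else 0 := by
    intro i k
    have hiLt := i.isLt
    by_cases hi : (i : ℕ) < m
    · rw [if_pos hi]
      set T : ℕ → ℂ := fun jv => (if (i : ℕ) ≤ jv ∧ jv ≤ (i : ℕ) + d
            then ((f.coeff (d - (jv - (i : ℕ)))) : ℂ) else 0) * β k ^ (d + m - 1 - jv) with hT
      have hstep : ∀ j : Fin (d + m), S i j * β k ^ (d + m - 1 - (j : ℕ)) = T (j : ℕ) := by
        intro j
        simp only [hT, hSdef, Matrix.map_apply, sylvesterMatrix, ← hm, ← hd, if_pos hi,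
          apply_ite (Int.cast : ℤ → ℂ), Int.cast_zero]
      rw [Finset.sum_congr rfl (fun j _ => hstep j),
        Fin.sum_univ_eq_sum_range T (d + m)]
      simp only [hT]
      simp only [ite_mul, zero_mul]
      rw [← Finset.sum_filter]
      have hfil : (Finset.range (d + m)).filter
          (fun jv => (i : ℕ) ≤ jv ∧ jv ≤ (i : ℕ) + d) = Finset.Icc (i : ℕ) ((i : ℕ) + d) := by
        ext x
        simp only [Finset.mem_filter, Finset.mem_range, Finset.mem_Icc]
        omega
      rw [hfil, ← Finset.Ico_add_one_right_eq_Icc, Finset.sum_Ico_eq_sum_range]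
      have hc : (i : ℕ) + d + 1 - (i : ℕ) = d + 1 := by omega
      rw [hc, ← Finset.sum_range_reflect]
      have hev : φ k = ∑ t ∈ Finset.range (d + 1), (f.coeff t : ℂ) * β k ^ t := by
        show eval (β k) fC = _
        rw [eval_eq_sum_range' (Nat.lt_succ_of_le (natDegree_map_le : fC.natDegree ≤ d))]
        exact Finset.sum_congr rfl fun t _ => by rw [coeff_map]; rfl
      rw [hev, Finset.mul_sum]
      apply Finset.sum_congr rfl
      intro t ht
      rw [Finset.mem_range] at ht
      have ht' : t ≤ d := by omega
      simp only [Nat.add_sub_cancel]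
      have h1 : d - ((i : ℕ) + (d - t) - (i : ℕ)) = t := by omega
      have h2 : d + m - 1 - ((i : ℕ) + (d - t)) = (m - 1 - (i : ℕ)) + t := by omega
      rw [h1, h2, pow_add]
      ring
    · rw [if_neg hi]
      set T : ℕ → ℂ := fun jv => (if (i : ℕ) - m ≤ jv ∧ jv ≤ ((i : ℕ) - m) + m
            then ((g.coeff (m - (jv - ((i : ℕ) - m)))) : ℂ) else 0) * β k ^ (d + m - 1 - jv) with hT
      have hstep : ∀ j : Fin (d + m), S i j * β k ^ (d + m - 1 - (j : ℕ)) = T (j : ℕ) := by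
        intro j
        simp only [hT, hSdef, Matrix.map_apply, sylvesterMatrix, ← hm, ← hd, if_neg hi,
          apply_ite (Int.cast : ℤ → ℂ), Int.cast_zero]
      rw [Finset.sum_congr rfl (fun j _ => hstep j),
        Fin.sum_univ_eq_sum_range T (d + m)]
      simp only [hT]
      simp only [ite_mul, zero_mul]
      rw [← Finset.sum_filter]
      have hfil : (Finset.range (d + m)).filter
          (fun jv => (i : ℕ) - m ≤ jv ∧ jv ≤ ((i : ℕ) - m) + m)
          = Finset.Icc ((i : ℕ) - m) (((i : ℕ) - m) + m) := by
        ext x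
        simp only [Finset.mem_filter, Finset.mem_range, Finset.mem_Icc]
        omega
      rw [hfil, ← Finset.Ico_add_one_right_eq_Icc, Finset.sum_Ico_eq_sum_range]
      have hc : (i : ℕ) - m + m + 1 - ((i : ℕ) - m) = m + 1 := by omega
      rw [hc, ← Finset.sum_range_reflect]
      set E : ℕ := d - 1 - ((i : ℕ) - m) with hE
      have hsummand : ∀ t ∈ Finset.range (m + 1),
          ((g.coeff (m - ((i : ℕ) - m + (m + 1 - 1 - t) - ((i : ℕ) - m)))) : ℂ)
            * β k ^ (d + m - 1 - ((i : ℕ) - m + (m + 1 - 1 - t)))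
          = (if t = m then β k ^ (E + t) else 0)
            + (if t = 0 then -(β k ^ (E + t)) else 0) := by
        intro t ht
        rw [Finset.mem_range] at ht
        have h1 : m - ((i : ℕ) - m + (m + 1 - 1 - t) - ((i : ℕ) - m)) = t := by omega
        have h2 : d + m - 1 - ((i : ℕ) - m + (m + 1 - 1 - t)) = E + t := by omega
        rw [h1, h2, hgc t]
        by_cases hA : t = m
        · subst hA
          simp [hm0]
        · by_cases hB : t = 0
          · subst hB
            simp [Ne.symm hm0]
          · simp [hA, hB]
      rw [Finset.sum_congr rfl hsummand, Finset.sum_add_distrib]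
      have hone : ∑ t ∈ Finset.range (m + 1), (if t = m then β k ^ (E + t) else 0)
          = β k ^ (E + m) := by
        rw [Finset.sum_eq_single m (fun b _ hb0 => if_neg hb0)
          (fun h => absurd (Finset.mem_range.mpr (by omega)) h), if_pos rfl]
      have htwo : ∑ t ∈ Finset.range (m + 1), (if t = 0 then -(β k ^ (E + t)) else 0)
          = -(β k ^ E) := by
        rw [Finset.sum_eq_single 0 (fun b _ hb0 => if_neg hb0)
          (fun h => absurd (Finset.mem_range.mpr (by omega)) h), if_pos rfl, Nat.add_zero]
      rw [hone, htwo, pow_add, hβn k, mul_one]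
      ring
  have hD : ∀ (i k : Fin d),
      S (emb d m (Sum.inr i)) (emb d m (Sum.inr k)) =
        if (i : ℕ) = (k : ℕ) then -1 else if (i : ℕ) = (k : ℕ) + m then 1 else 0 := by
    intro i k
    have hv1 : ((emb d m (Sum.inr i) : Fin (d + m)) : ℕ) = m + (i : ℕ) := emb_inr d m i
    have hv2 : ((emb d m (Sum.inr k) : Fin (d + m)) : ℕ) = m + (k : ℕ) := emb_inr d m k
    simp only [hSdef, Matrix.map_apply, sylvesterMatrix, ← hm, ← hd, hv1, hv2, Nat.add_sub_cancel_left]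
    rw [if_neg (by omega)]
    have hcond : (i : ℕ) ≤ m + (k : ℕ) ∧ m + (k : ℕ) ≤ (i : ℕ) + m ∨ True := Or.inr trivial
    by_cases h1 : (i : ℕ) = (k : ℕ)
    · have hc1 : (i : ℕ) ≤ m + (k : ℕ) ∧ m + (k : ℕ) ≤ (i : ℕ) + m := ⟨by omega, by omega⟩
      rw [if_pos hc1, if_pos h1]
      have harg : m - (m + (k : ℕ) - (i : ℕ)) = 0 := by omega
      rw [harg, hgc 0, if_neg (Ne.symm hm0), if_pos rfl]
      push_cast
      ring
    · rw [if_neg h1]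
      by_cases h2 : (i : ℕ) = (k : ℕ) + m
      · have hc2 : (i : ℕ) ≤ m + (k : ℕ) ∧ m + (k : ℕ) ≤ (i : ℕ) + m := ⟨by omega, by omega⟩
        rw [if_pos hc2, if_pos h2]
        have harg : m - (m + (k : ℕ) - (i : ℕ)) = m := by omega
        rw [harg, hgc m, if_pos rfl]
        push_cast
        ring
      · rw [if_neg h2]
        by_cases h3 : (i : ℕ) ≤ m + (k : ℕ) ∧ m + (k : ℕ) ≤ (i : ℕ) + m
        · rw [if_pos h3]
          rw [hgc, if_neg (by omega), if_neg (by omega)]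
          exact Int.cast_zero
        · rw [if_neg h3]
          exact Int.cast_zero
  have habs := abs_det_eq d m hn S β hβ hβ1 φ hrow hD
  have hSdet : S.det = ((_root_.resultant f g : ℤ) : ℂ) := by
    rw [_root_.resultant, hSdef]
    exact ((Int.castRingHom ℂ).map_det (sylvesterMatrix f g)).symm
  have hcast : Complex.abs S.det = ((_root_.resultant f g).natAbs : ℝ) := by
    rw [hSdet, Complex.abs_intCast, ← Int.cast_abs, Int.abs_eq_natAbs, Int.cast_natCast]
  rw [← hcast, habs]
  haveI : NeZero m := ⟨hm0⟩
  refine Finset.prod_nbij β (fun a _ => ?_) (fun a _ b _ h => hβ h) (fun x hx => ?_)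
    (fun a _ => rfl)
  · exact (Polynomial.mem_nthRootsFinset (by omega) (1 : ℂ)).mpr (hβn a)
  · simp only [Finset.coe_univ, Set.image_univ]
    obtain ⟨j, hj, hjx⟩ := hζ.eq_pow_of_pow_eq_one
      ((Polynomial.mem_nthRootsFinset (by omega) (1 : ℂ)).mp hx)
    exact ⟨⟨j, hj⟩, hjx⟩

lemma prod_nthRoots_pow (n r : ℕ) (hn : 1 ≤ n) (hr : Nat.Coprime r n) (h : ℂ → ℝ) :
    ∏ x ∈ Polynomial.nthRootsFinset n (1 : ℂ), h (x ^ r)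
      = ∏ x ∈ Polynomial.nthRootsFinset n (1 : ℂ), h x := by
  classical
  by_cases hn1 : n = 1
  · subst hn1
    have hset : Polynomial.nthRootsFinset 1 (1 : ℂ) = {1} := by
      ext x
      rw [Polynomial.mem_nthRootsFinset one_pos, pow_one, Finset.mem_singleton]
    rw [hset, Finset.prod_singleton, Finset.prod_singleton, one_pow]
  · have hn2 : 1 < n := by omega
    obtain ⟨s, -, hs⟩ := Nat.exists_mul_mod_eq_one_of_coprime hr hn2
    have key : ∀ x ∈ Polynomial.nthRootsFinset n (1 : ℂ), x ^ (r * s) = x := by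
      intro x hx
      have hxn : x ^ n = 1 := (Polynomial.mem_nthRootsFinset (by omega) (1 : ℂ)).mp hx
      conv_lhs => rw [← Nat.mod_add_div (r * s) n]
      rw [pow_add, hs, pow_one, pow_mul, hxn, one_pow, mul_one]
    refine Finset.prod_nbij' (fun x => x ^ r) (fun x => x ^ s) ?_ ?_ ?_ ?_ (fun a _ => rfl)
    · intro a ha
      have han : a ^ n = 1 := (Polynomial.mem_nthRootsFinset (by omega) (1 : ℂ)).mp ha
      exact (Polynomial.mem_nthRootsFinset (by omega) (1 : ℂ)).mpr
        (by rw [← pow_mul, mul_comm, pow_mul, han, one_pow])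
    · intro a ha
      have han : a ^ n = 1 := (Polynomial.mem_nthRootsFinset (by omega) (1 : ℂ)).mp ha
      exact (Polynomial.mem_nthRootsFinset (by omega) (1 : ℂ)).mpr
        (by rw [← pow_mul, mul_comm, pow_mul, han, one_pow])
    · intro a ha
      show (a ^ r) ^ s = a
      rw [← pow_mul]
      exact key a ha
    · intro a ha
      show (a ^ s) ^ r = a
      rw [← pow_mul, mul_comm s r]
      exact key a ha


/-- For distinct primes `p, q`, Fried's pair
`F(t) = Φ_{pq}(t)Φ_{p²q}(t)Φ_{pq²}(t)` and `G(t) = Φ_{p²q²}(t)Φ_{pq}(t)Φ_{pq}(t)`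
have the same cyclic resultants in absolute value: `|R(F, tⁿ-1)| = |R(G, tⁿ-1)|`
for every `n ≥ 1`. -/
theorem fried_pair_same_cyclic_resultants
    (p q : ℕ) (hp : p.Prime) (hq : q.Prime) (hpq : p ≠ q)
    (F G : Polynomial ℤ)
    (hF : F = cyclotomic (p * q) ℤ * cyclotomic (p ^ 2 * q) ℤ * cyclotomic (p * q ^ 2) ℤ)
    (hG : G = cyclotomic (p ^ 2 * q ^ 2) ℤ * cyclotomic (p * q) ℤ * cyclotomic (p * q) ℤ)
    (n : ℕ) (hn : 1 ≤ n) :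
    (_root_.resultant F ((X : Polynomial ℤ) ^ n - 1)).natAbs
      = (_root_.resultant G ((X : Polynomial ℤ) ^ n - 1)).natAbs := by
  classical
  have hdeg : ((X : Polynomial ℤ) ^ n - 1).natDegree = n := by
    rw [show ((X : Polynomial ℤ) ^ n - 1) = X ^ n - C 1 by rw [Polynomial.C_1], natDegree_X_pow_sub_C]
  have hcoeff : ∀ k, ((X : Polynomial ℤ) ^ n - 1).coeff k =
      if k = n then 1 else if k = 0 then -1 else 0 := by
    intro k
    rw [coeff_sub, coeff_X_pow, coeff_one]
    by_cases h1 : k = n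
    · subst h1
      rw [if_pos rfl, if_pos rfl, if_neg (by omega)]
      ring
    · rw [if_neg h1, if_neg h1]
      by_cases h2 : k = 0
      · rw [if_pos h2, if_pos h2]; ring
      · rw [if_neg h2, if_neg h2]; ring
  have h1 := abs_resultant F _ n hn hdeg hcoeff
  have h2 := abs_resultant G _ n hn hdeg hcoeff
  set Φ : ℂ → ℝ := fun x => Complex.abs (eval x (cyclotomic (p * q) ℂ)) with hΦ
  have hppos : 0 < p := hp.pos
  have hqpos : 0 < q := hq.pos
  -- expand identities
  have hexp1 : ∀ x : ℂ, eval x (cyclotomic (p ^ 2 * q) ℂ) = eval (x ^ p) (cyclotomic (p * q) ℂ) := by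
    intro x
    rw [show p ^ 2 * q = (p * q) * p by ring,
      ← cyclotomic_expand_eq_cyclotomic hp (dvd_mul_right p q), expand_eval]
  have hexp2 : ∀ x : ℂ, eval x (cyclotomic (p * q ^ 2) ℂ) = eval (x ^ q) (cyclotomic (p * q) ℂ) := by
    intro x
    rw [show p * q ^ 2 = (p * q) * q by ring,
      ← cyclotomic_expand_eq_cyclotomic hq (dvd_mul_left q p), expand_eval]
  have hexp3 : ∀ x : ℂ, eval x (cyclotomic (p ^ 2 * q ^ 2) ℂ)
      = eval ((x ^ p) ^ q) (cyclotomic (p * q) ℂ) := by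
    intro x
    rw [show p ^ 2 * q ^ 2 = (p * q ^ 2) * p by ring,
      ← cyclotomic_expand_eq_cyclotomic hp (Dvd.intro (q ^ 2) rfl), expand_eval, hexp2]
  -- rewrite the two products
  have hFeval : ∀ x : ℂ, Complex.abs ((F.map (Int.castRingHom ℂ)).eval x)
      = Φ x * (Φ (x ^ p) * Φ (x ^ q)) := by
    intro x
    rw [hF, Polynomial.map_mul, Polynomial.map_mul]
    simp only [map_cyclotomic]
    rw [eval_mul, eval_mul, _root_.map_mul, _root_.map_mul]
    simp only [hΦ]
    rw [hexp1 x, hexp2 x]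
    ring
  have hGeval : ∀ x : ℂ, Complex.abs ((G.map (Int.castRingHom ℂ)).eval x)
      = Φ ((x ^ p) ^ q) * (Φ x * Φ x) := by
    intro x
    rw [hG, Polynomial.map_mul, Polynomial.map_mul]
    simp only [map_cyclotomic]
    rw [eval_mul, eval_mul, _root_.map_mul, _root_.map_mul]
    simp only [hΦ]
    rw [hexp3 x]
    ring
  rw [Finset.prod_congr rfl (fun x _ => hFeval x)] at h1
  rw [Finset.prod_congr rfl (fun x _ => hGeval x)] at h2
  simp only [Finset.prod_mul_distrib] at h1 h2
  -- main product identity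
  have hprod : (∏ x ∈ nthRootsFinset n (1 : ℂ), Φ x) *
        ((∏ x ∈ nthRootsFinset n (1 : ℂ), Φ (x ^ p)) * (∏ x ∈ nthRootsFinset n (1 : ℂ), Φ (x ^ q)))
      = (∏ x ∈ nthRootsFinset n (1 : ℂ), Φ ((x ^ p) ^ q)) *
        ((∏ x ∈ nthRootsFinset n (1 : ℂ), Φ x) * (∏ x ∈ nthRootsFinset n (1 : ℂ), Φ x)) := by
    by_cases hdvd : p * q ∣ n
    · -- both sides vanish: a primitive pq-th root of unity is an n-th root and kills Φ
      have hpq0 : p * q ≠ 0 := by positivity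
      set ξ : ℂ := Complex.exp (2 * Real.pi * Complex.I / (p * q)) with hξ
      have hξprim : IsPrimitiveRoot ξ (p * q) := by
        have := Complex.isPrimitiveRoot_exp (p * q) hpq0
        convert this using 2
        push_cast
        ring
      have hξmem : ξ ∈ nthRootsFinset n (1 : ℂ) := by
        obtain ⟨t, ht⟩ := hdvd
        rw [Polynomial.mem_nthRootsFinset (by omega), ht, pow_mul, hξprim.pow_eq_one, one_pow]
      have hξ0 : Φ ξ = 0 := by
        simp only [hΦ]
        rw [show eval ξ (cyclotomic (p * q) ℂ) = 0 from hξprim.isRoot_cyclotomic (by positivity),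
          map_zero]
      rw [Finset.prod_eq_zero hξmem hξ0]
      ring
    · have hcop : Nat.Coprime p n ∨ Nat.Coprime q n := by
        rcases Nat.coprime_or_dvd_of_prime hp n with h | h
        · left; exact h
        · rcases Nat.coprime_or_dvd_of_prime hq n with h' | h'
          · right; exact h'
          · exact absurd (Nat.Coprime.mul_dvd_of_dvd_of_dvd
              ((Nat.coprime_primes hp hq).mpr hpq) h h') hdvd
      rcases hcop with hc | hc
      · have e1 : ∏ x ∈ nthRootsFinset n (1 : ℂ), Φ (x ^ p) = ∏ x ∈ nthRootsFinset n (1 : ℂ), Φ x :=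
          prod_nthRoots_pow n p hn hc Φ
        have e2 : ∏ x ∈ nthRootsFinset n (1 : ℂ), Φ ((x ^ p) ^ q)
            = ∏ x ∈ nthRootsFinset n (1 : ℂ), Φ (x ^ q) :=
          prod_nthRoots_pow n p hn hc (fun y => Φ (y ^ q))
        rw [e1, e2]
        ring
      · have e1 : ∏ x ∈ nthRootsFinset n (1 : ℂ), Φ (x ^ q) = ∏ x ∈ nthRootsFinset n (1 : ℂ), Φ x :=
          prod_nthRoots_pow n q hn hc Φ
        have e2 : ∏ x ∈ nthRootsFinset n (1 : ℂ), Φ ((x ^ p) ^ q)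
            = ∏ x ∈ nthRootsFinset n (1 : ℂ), Φ (x ^ p) := by
          have := prod_nthRoots_pow n q hn hc (fun y => Φ (y ^ p))
          rw [← this]
          exact Finset.prod_congr rfl fun x _ => by rw [← pow_mul, ← pow_mul, mul_comm]
        rw [e1, e2]
        ring
  have : ((_root_.resultant F ((X : Polynomial ℤ) ^ n - 1)).natAbs : ℝ)
      = ((_root_.resultant G ((X : Polynomial ℤ) ^ n - 1)).natAbs : ℝ) := by
    rw [h1, h2, hprod]
  exact_mod_cast this
end
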